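/- Define rational numbers c̄_j^{(h)} by c̄_0^{(0)} = 1 and c̄_j^{(h+1)} = −(2j−1)·c̄_{j−1}^{(h)} + (2h−j)·c̄_j^{(h)}, and rational numbers ĉ_j^{(h)} by ĉ_0^{(0)} = 1 and ĉ_j^{(h+1)} = −( j(2j−1)/(h+1) )·ĉ_{j−1}^{(h)} + ( (4h² − j² + 2h − j)/(2(h+1)) )·ĉ_j^{(h)}, in both cases for h ≥ 0, 0 ≤ j ≤ h+1, with the conventions c̄_{−1}^{(h)} = ĉ_{−1}^{(h)} = 0 and c̄_{h+1}^{(h)} = ĉ_{h+1}^{(h)} = 0. Then ĉ_j^{(h)} = c̄_j^{(h)} for all h ≥ 0 and 0 ≤ j ≤ h. -/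

import Mathlib

/-- The coefficients `c̄_j^{(h)}`: `c̄_0^{(0)} = 1`,
`c̄_j^{(h+1)} = −(2j−1)·c̄_{j−1}^{(h)} + (2h−j)·c̄_j^{(h)}`,
with the conventions `c̄_{−1}^{(h)} = 0` and `c̄_j^{(h)} = 0` for `j > h`. -/
def cbar : ℕ → ℕ → ℚ
  | 0, j => if j = 0 then 1 else 0
  | h + 1, j =>
      (-(2 * (j : ℚ) - 1)) * (if j = 0 then 0 else cbar h (j - 1)) +
        (2 * (h : ℚ) - (j : ℚ)) * cbar h j

/-- The coefficients `ĉ_j^{(h)}`: `ĉ_0^{(0)} = 1`,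
`ĉ_j^{(h+1)} = −(j(2j−1)/(h+1))·ĉ_{j−1}^{(h)} + ((4h²−j²+2h−j)/(2(h+1)))·ĉ_j^{(h)}`,
with the conventions `ĉ_{−1}^{(h)} = 0` and `ĉ_j^{(h)} = 0` for `j > h`. -/
def chat : ℕ → ℕ → ℚ
  | 0, j => if j = 0 then 1 else 0
  | h + 1, j =>
      (-((j : ℚ) * (2 * (j : ℚ) - 1) / ((h : ℚ) + 1))) *
          (if j = 0 then 0 else chat h (j - 1)) +
        ((4 * (h : ℚ) ^ 2 - (j : ℚ) ^ 2 + 2 * (h : ℚ) - (j : ℚ)) / (2 * ((h : ℚ) + 1))) *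
          chat h j

lemma cbar_col0 : ∀ h : ℕ, cbar (h + 1) 0 = 0 := by
  intro h
  induction h with
  | zero => simp [cbar]
  | succ n ih => rw [cbar, ih]; simp

lemma cbar_hi : ∀ h j : ℕ, h < j → cbar h j = 0 := by
  intro h
  induction h with
  | zero =>
    intro j hj
    have hj0 : j ≠ 0 := by omega
    simp [cbar, hj0]
  | succ n ih =>
    intro j hj
    have hj0 : j ≠ 0 := by omega
    rw [cbar, if_neg hj0, ih (j - 1) (by omega), ih j (by omega)]
    ring

lemma cbar_E : ∀ h j : ℕ, 1 ≤ j →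
    ((j : ℚ) - 1) * ((j : ℚ) - 2 * h) * cbar h j =
      2 * (2 * (j : ℚ) - 1) * ((h : ℚ) + 1 - (j : ℚ)) * cbar h (j - 1) := by
  intro h
  induction h with
  | zero =>
    intro j hj
    rcases (by omega : j = 1 ∨ 2 ≤ j) with rfl | hj2
    · norm_num [cbar]
    · rw [cbar_hi 0 j (by omega), cbar_hi 0 (j - 1) (by omega)]
      ring
  | succ h ih =>
    intro j hj
    rcases (by omega : j = 1 ∨ 2 ≤ j) with rfl | hj2
    · rw [cbar_col0]
      push_cast
      ring
    · rcases (by omega : h + 2 ≤ j ∨ j ≤ h + 1) with hbig | hsmall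
      · -- cbar (h+1) j = 0; either j = h+2 (RHS factor vanishes) or cbar (h+1) (j-1) = 0
        rw [cbar_hi (h + 1) j (by omega)]
        rcases (by omega : j = h + 2 ∨ h + 3 ≤ j) with rfl | hbig2
        · push_cast
          ring
        · rw [cbar_hi (h + 1) (j - 1) (by omega)]
          ring
      · rcases (by omega : j = 2 * h ∨ j ≠ 2 * h) with hj2h | hjne
        · -- forces h = 1, j = 2
          obtain ⟨rfl, rfl⟩ : h = 1 ∧ j = 2 := by omega
          norm_num [cbar]
        · have hne : ((j : ℚ) - 2 * (h : ℚ)) ≠ 0 := by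
            have : (j : ℚ) ≠ 2 * (h : ℚ) := by exact_mod_cast hjne
            exact sub_ne_zero.mpr this
          apply mul_left_cancel₀ hne
          have hj10 : j - 1 ≠ 0 := by omega
          have hj0 : j ≠ 0 := by omega
          have E1 := ih j (by omega)
          have E2 := ih (j - 1) (by omega)
          rw [show j - 1 - 1 = j - 2 from by omega] at E2
          rw [cbar, cbar, if_neg hj0, if_neg hj10,
            show j - 1 - 1 = j - 2 from by omega]
          push_cast [Nat.cast_sub (show 1 ≤ j by omega)] at E2 ⊢
          linear_combination ((j : ℚ) - 2 * h - 2) * (2 * (h : ℚ) - j) * E1 -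
            (2 * (j : ℚ) - 1) * ((j : ℚ) - 2 * h) * E2

/-- the two recursions define the same coefficients. -/
theorem stmt_12 : ∀ h j : ℕ, j ≤ h → chat h j = cbar h j := by
  have main : ∀ h j : ℕ, chat h j = cbar h j := by
    intro h
    induction h with
    | zero => intro j; rfl
    | succ h ih =>
      intro j
      rw [chat, cbar, ih j]
      rcases Nat.eq_zero_or_pos j with rfl | hj
      · simp only [if_pos rfl, mul_zero, zero_add, Nat.cast_zero]
        rcases Nat.eq_zero_or_pos h with rfl | hh
        · norm_num [cbar]
        · obtain ⟨k, rfl⟩ := Nat.exists_eq_succ_of_ne_zero (by omega : h ≠ 0)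
          rw [cbar_col0]
          simp
      · rw [ih (j - 1), if_neg (by omega : j ≠ 0)]
        have E := cbar_E h j hj
        have hh : ((h : ℚ) + 1) ≠ 0 := by positivity
        field_simp
        linear_combination (-1 : ℚ) * E
  intro h j _
  exact main h j
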